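/- arXiv:quant-ph/0008047 — 3 statements merged into one kernel-verified Lean document; each statement's English description precedes it below -/
import Mathlib

section
/- The fidelity of p.p.t. distillation F_Γ is convex in the state and concave in 1/K: for states ρ, ρ₁, ρ₂ on ℂ^a ⊗ ℂ^b, real numbers K, K₁, K₂ > 0, and 0 ≤ π ≤ 1, one has F_Γ(πρ₁ + (1−π)ρ₂; K) ≤ π·F_Γ(ρ₁;K) + (1−π)·F_Γ(ρ₂;K), and F_Γ(ρ; K₁K₂/(πK₂ + (1−π)K₁)) ≥ π·F_Γ(ρ;K₁) + (1−π)·F_Γ(ρ;K₂). -/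
open Matrix Filter
open scoped ComplexOrder

noncomputable section

/-- Partial transpose on the second tensor factor:
`ptrans M ((i,j),(k,l)) = M ((i,l),(k,j))`. -/
def ptrans {ι κ : Type*} (M : Matrix (ι × κ) (ι × κ) ℂ) : Matrix (ι × κ) (ι × κ) ℂ :=
  fun x y => M (x.1, y.2) (y.1, x.2)

/-- Fidelity of `K`-state p.p.t. distillation:
the supremum of `Tr(Fρ)` over Hermitian `F` with `0 ≤ F ≤ 1` and `-1/K ≤ F^Γ ≤ 1/K`. -/
def FGamma {ι κ : Type*} [Fintype ι] [Fintype κ] [DecidableEq ι] [DecidableEq κ]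
    (ρ : Matrix (ι × κ) (ι × κ) ℂ) (K : ℝ) : ℝ :=
  sSup {x : ℝ | ∃ F : Matrix (ι × κ) (ι × κ) ℂ,
    F.PosSemidef ∧ (1 - F).PosSemidef ∧
    (((1 / K : ℝ) : ℂ) • 1 - ptrans F).PosSemidef ∧
    (ptrans F + ((1 / K : ℝ) : ℂ) • 1).PosSemidef ∧
    x = ((F * ρ).trace).re}

namespace FGammaAux

variable {n : Type*} [Fintype n] [DecidableEq n]

lemma smulPSD {c : ℝ} (hc : 0 ≤ c) {A : Matrix n n ℂ} (hA : A.PosSemidef) :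
    ((c : ℂ) • A).PosSemidef := by
  refine Matrix.posSemidef_iff_dotProduct_mulVec.mpr ⟨?_, ?_⟩
  · have := hA.1
    rw [Matrix.IsHermitian, Matrix.conjTranspose_smul, this]
    congr 1
    simp
  · intro x
    have h1 : (0 : ℂ) ≤ (c : ℂ) := by
      rw [Complex.le_def]; simp [hc]
    have h2 := hA.dotProduct_mulVec_nonneg x
    have : star x ⬝ᵥ ((c : ℂ) • A) *ᵥ x = (c : ℂ) * (star x ⬝ᵥ A *ᵥ x) := by
      rw [Matrix.smul_mulVec, dotProduct_smul, smul_eq_mul]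
    rw [this]
    exact mul_nonneg h1 h2

lemma trace_re_nonneg {A : Matrix n n ℂ} (hA : A.PosSemidef) : 0 ≤ A.trace.re := by
  have h : ∀ i, 0 ≤ A i i := fun i => by
    simpa [dotProduct, Pi.single_apply, apply_ite] using hA.dotProduct_mulVec_nonneg (Pi.single i 1)
  rw [Matrix.trace]
  simp only [Matrix.diag]
  rw [Complex.re_sum]
  exact Finset.sum_nonneg fun i _ => ((Complex.le_def.mp (h i)).1 : _)

lemma trace_mul_re_nonneg {A B : Matrix n n ℂ} (hA : A.PosSemidef) (hB : B.PosSemidef) :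
    0 ≤ (A * B).trace.re := by
  obtain ⟨C, hC⟩ : ∃ C : Matrix n n ℂ, A = Cᴴ * C := by
    open MatrixOrder in exact CStarAlgebra.nonneg_iff_eq_star_mul_self.mp hA.nonneg
  have : (A * B).trace = (C * B * Cᴴ).trace := by
    rw [hC, Matrix.mul_assoc, Matrix.trace_mul_comm Cᴴ (C * B)]
  rw [this]
  exact trace_re_nonneg (hB.mul_mul_conjTranspose_same C)

end FGammaAux

section FGammaSets

open FGammaAux

variable {ι κ : Type*} [Fintype ι] [Fintype κ] [DecidableEq ι] [DecidableEq κ]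

lemma ptrans_add (A B : Matrix (ι × κ) (ι × κ) ℂ) :
    ptrans (A + B) = ptrans A + ptrans B := rfl

lemma ptrans_smul (c : ℂ) (A : Matrix (ι × κ) (ι × κ) ℂ) :
    ptrans (c • A) = c • ptrans A := rfl

/-- The feasible-value set of `FGamma`. -/
def FSet (ρ : Matrix (ι × κ) (ι × κ) ℂ) (K : ℝ) : Set ℝ :=
  {x : ℝ | ∃ F : Matrix (ι × κ) (ι × κ) ℂ,
    F.PosSemidef ∧ (1 - F).PosSemidef ∧
    (((1 / K : ℝ) : ℂ) • 1 - ptrans F).PosSemidef ∧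
    (ptrans F + ((1 / K : ℝ) : ℂ) • 1).PosSemidef ∧
    x = ((F * ρ).trace).re}

lemma FGamma_eq (ρ : Matrix (ι × κ) (ι × κ) ℂ) (K : ℝ) :
    FGamma ρ K = sSup (FSet ρ K) := rfl

lemma zero_mem_FSet (ρ : Matrix (ι × κ) (ι × κ) ℂ) {K : ℝ} (hK : 0 < K) :
    (0 : ℝ) ∈ FSet ρ K := by
  refine ⟨0, Matrix.PosSemidef.zero, by simpa using Matrix.PosSemidef.one, ?_, ?_, by simp⟩
  · have : ptrans (0 : Matrix (ι × κ) (ι × κ) ℂ) = 0 := rfl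
    rw [this, sub_zero]
    simpa using smulPSD (le_of_lt (by positivity : (0:ℝ) < 1 / K)) Matrix.PosSemidef.one
  · have : ptrans (0 : Matrix (ι × κ) (ι × κ) ℂ) = 0 := rfl
    rw [this, zero_add]
    simpa using smulPSD (le_of_lt (by positivity : (0:ℝ) < 1 / K)) Matrix.PosSemidef.one

lemma FSet_nonempty (ρ : Matrix (ι × κ) (ι × κ) ℂ) {K : ℝ} (hK : 0 < K) :
    (FSet ρ K).Nonempty := ⟨0, zero_mem_FSet ρ hK⟩

lemma FSet_bddAbove {ρ : Matrix (ι × κ) (ι × κ) ℂ} (hρ : ρ.PosSemidef) (hρtr : ρ.trace = 1)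
    (K : ℝ) : BddAbove (FSet ρ K) := by
  refine ⟨1, fun x hx => ?_⟩
  obtain ⟨F, hF, hF1, -, -, hx⟩ := hx
  have h1 : ((1 - F) * ρ).trace = ρ.trace - (F * ρ).trace := by
    rw [Matrix.sub_mul, Matrix.one_mul, Matrix.trace_sub]
  have h2 : 0 ≤ ((1 - F) * ρ).trace.re := trace_mul_re_nonneg hF1 hρ
  rw [h1, hρtr] at h2
  simp only [Complex.sub_re, Complex.one_re] at h2
  rw [hx]; linarith

end FGammaSets

open FGammaAux

/-- `F_Γ` is convex in the state and concave in `1/K`. -/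
theorem FGamma_convex_concave {a b : ℕ}
    (ρ ρ₁ ρ₂ : Matrix (Fin a × Fin b) (Fin a × Fin b) ℂ)
    (hρ : ρ.PosSemidef) (hρtr : ρ.trace = 1)
    (hρ₁ : ρ₁.PosSemidef) (hρ₁tr : ρ₁.trace = 1)
    (hρ₂ : ρ₂.PosSemidef) (hρ₂tr : ρ₂.trace = 1)
    (K K₁ K₂ : ℝ) (hK : 0 < K) (hK₁ : 0 < K₁) (hK₂ : 0 < K₂)
    (p : ℝ) (hp₀ : 0 ≤ p) (hp₁ : p ≤ 1) :
    FGamma (((p : ℝ) : ℂ) • ρ₁ + (((1 - p : ℝ)) : ℂ) • ρ₂) K ≤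
        p * FGamma ρ₁ K + (1 - p) * FGamma ρ₂ K ∧
      p * FGamma ρ K₁ + (1 - p) * FGamma ρ K₂ ≤
        FGamma ρ ((K₁ * K₂) / (p * K₂ + (1 - p) * K₁)) := by
  have hq₀ : (0:ℝ) ≤ 1 - p := by linarith
  constructor
  · -- convexity in the state
    rw [FGamma_eq, FGamma_eq, FGamma_eq]
    apply csSup_le (FSet_nonempty _ hK)
    rintro x ⟨F, hF, hF1, hFp1, hFp2, hx⟩
    have hsplit : ((F * (((p:ℝ):ℂ) • ρ₁ + (((1 - p:ℝ)):ℂ) • ρ₂)).trace).re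
        = p * ((F * ρ₁).trace).re + (1 - p) * ((F * ρ₂).trace).re := by
      rw [Matrix.mul_add, Matrix.trace_add, Matrix.mul_smul, Matrix.trace_smul,
        Matrix.mul_smul, Matrix.trace_smul]
      simp [Complex.add_re, Complex.smul_re]
    have hm1 : ((F * ρ₁).trace).re ∈ FSet ρ₁ K := ⟨F, hF, hF1, hFp1, hFp2, rfl⟩
    have hm2 : ((F * ρ₂).trace).re ∈ FSet ρ₂ K := ⟨F, hF, hF1, hFp1, hFp2, rfl⟩
    rw [hx, hsplit]
    exact add_le_add
      (mul_le_mul_of_nonneg_left (le_csSup (FSet_bddAbove hρ₁ hρ₁tr K) hm1) hp₀)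
      (mul_le_mul_of_nonneg_left (le_csSup (FSet_bddAbove hρ₂ hρ₂tr K) hm2) hq₀)
  · -- concavity in 1/K
    set K' : ℝ := K₁ * K₂ / (p * K₂ + (1 - p) * K₁) with hK'def
    have hden : 0 < p * K₂ + (1 - p) * K₁ := by
      have h3 : 0 < min K₁ K₂ := lt_min hK₁ hK₂
      nlinarith [mul_le_mul_of_nonneg_left (min_le_right K₁ K₂) hp₀,
        mul_le_mul_of_nonneg_left (min_le_left K₁ K₂) hq₀]
    have hKeq : 1 / K' = p / K₁ + (1 - p) / K₂ := by
      rw [hK'def]; field_simp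
    rw [FGamma_eq, FGamma_eq, FGamma_eq]
    -- key: combination of feasible points is feasible
    have hcomb : ∀ x₁ ∈ FSet ρ K₁, ∀ x₂ ∈ FSet ρ K₂,
        p * x₁ + (1 - p) * x₂ ∈ FSet ρ K' := by
      rintro x₁ ⟨F₁, hF₁, hF₁1, hF₁p1, hF₁p2, hx₁⟩ x₂ ⟨F₂, hF₂, hF₂1, hF₂p1, hF₂p2, hx₂⟩
      refine ⟨((p:ℝ):ℂ) • F₁ + (((1-p:ℝ)):ℂ) • F₂, ?_, ?_, ?_, ?_, ?_⟩
      · exact (smulPSD hp₀ hF₁).add (smulPSD hq₀ hF₂)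
      · have key : (1 : Matrix (Fin a × Fin b) (Fin a × Fin b) ℂ)
            - (((p:ℝ):ℂ) • F₁ + (((1-p:ℝ)):ℂ) • F₂)
            = ((p:ℝ):ℂ) • (1 - F₁) + (((1-p:ℝ)):ℂ) • (1 - F₂) := by
          have hpq : ((p:ℝ):ℂ) + (((1-p:ℝ)):ℂ) = 1 := by push_cast; ring
          rw [smul_sub, smul_sub, sub_add_sub_comm, ← add_smul, hpq, one_smul]
        rw [key]
        exact (smulPSD hp₀ hF₁1).add (smulPSD hq₀ hF₂1)
      · have hsc : ((1 / K' : ℝ) : ℂ)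
            = ((p:ℝ):ℂ) * ((1/K₁ : ℝ):ℂ) + (((1-p:ℝ)):ℂ) * ((1/K₂ : ℝ):ℂ) := by
          push_cast
          rw [show (1:ℂ)/(K':ℂ) = (((1:ℝ)/K' : ℝ) : ℂ) by push_cast; ring,
            hKeq]
          push_cast; ring
        have key : ((1 / K' : ℝ) : ℂ) • (1 : Matrix (Fin a × Fin b) (Fin a × Fin b) ℂ)
            - ptrans (((p:ℝ):ℂ) • F₁ + (((1-p:ℝ)):ℂ) • F₂)
            = ((p:ℝ):ℂ) • (((1/K₁:ℝ):ℂ) • 1 - ptrans F₁)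
              + (((1-p:ℝ)):ℂ) • (((1/K₂:ℝ):ℂ) • 1 - ptrans F₂) := by
          rw [ptrans_add, ptrans_smul, ptrans_smul, smul_sub, smul_sub,
            smul_smul, smul_smul, hsc, add_smul]
          abel
        rw [key]
        exact (smulPSD hp₀ hF₁p1).add (smulPSD hq₀ hF₂p1)
      · have hsc : ((1 / K' : ℝ) : ℂ)
            = ((p:ℝ):ℂ) * ((1/K₁ : ℝ):ℂ) + (((1-p:ℝ)):ℂ) * ((1/K₂ : ℝ):ℂ) := by
          push_cast
          rw [show (1:ℂ)/(K':ℂ) = (((1:ℝ)/K' : ℝ) : ℂ) by push_cast; ring,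
            hKeq]
          push_cast; ring
        have key : ptrans (((p:ℝ):ℂ) • F₁ + (((1-p:ℝ)):ℂ) • F₂)
            + ((1 / K' : ℝ) : ℂ) • (1 : Matrix (Fin a × Fin b) (Fin a × Fin b) ℂ)
            = ((p:ℝ):ℂ) • (ptrans F₁ + ((1/K₁:ℝ):ℂ) • 1)
              + (((1-p:ℝ)):ℂ) • (ptrans F₂ + ((1/K₂:ℝ):ℂ) • 1) := by
          rw [ptrans_add, ptrans_smul, ptrans_smul, smul_add, smul_add,
            smul_smul, smul_smul, hsc, add_smul]
          abel
        rw [key]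
        exact (smulPSD hp₀ hF₁p2).add (smulPSD hq₀ hF₂p2)
      · rw [hx₁, hx₂, Matrix.add_mul, Matrix.trace_add, Matrix.smul_mul,
          Matrix.trace_smul, Matrix.smul_mul, Matrix.trace_smul]
        simp [Complex.add_re, Complex.smul_re]
    -- now conclude via epsilon argument
    have hbdd' : BddAbove (FSet ρ K') := FSet_bddAbove hρ hρtr K'
    refine le_of_forall_pos_le_add fun ε hε => ?_
    obtain ⟨x₁, hx₁mem, hx₁⟩ := exists_lt_of_lt_csSup (FSet_nonempty ρ hK₁)
      (show sSup (FSet ρ K₁) - ε < sSup (FSet ρ K₁) by linarith)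
    obtain ⟨x₂, hx₂mem, hx₂⟩ := exists_lt_of_lt_csSup (FSet_nonempty ρ hK₂)
      (show sSup (FSet ρ K₂) - ε < sSup (FSet ρ K₂) by linarith)
    have hmem := hcomb x₁ hx₁mem x₂ hx₂mem
    have hle : p * x₁ + (1 - p) * x₂ ≤ sSup (FSet ρ K') := le_csSup hbdd' hmem
    have h1 : p * sSup (FSet ρ K₁) ≤ p * (x₁ + ε) :=
      mul_le_mul_of_nonneg_left (by linarith) hp₀
    have h2 : (1 - p) * sSup (FSet ρ K₂) ≤ (1 - p) * (x₂ + ε) :=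
      mul_le_mul_of_nonneg_left (by linarith) hq₀
    nlinarith
end
end

section
/- For any integer d ≥ 1 and any real K > 0, the fidelity of K-state p.p.t. distillation of the maximally entangled state satisfies F_Γ(Φ(d);K) = min(1, d/K). -/
open Matrix Filter
open scoped ComplexOrder

noncomputable section

/-- The maximally entangled state `Φ(d) = (1/d) ∑ |ii⟩⟨jj|`. -/
def maxEnt (d : ℕ) : Matrix (Fin d × Fin d) (Fin d × Fin d) ℂ :=
  fun x y => if x.1 = x.2 ∧ y.1 = y.2 then (1 / (d : ℂ)) else 0

/-! ### Auxiliary material -/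

namespace FGammaAux

section general

variable {n : Type*} [Fintype n] [DecidableEq n]

lemma psd_of_idem {P : Matrix n n ℂ} (h1 : P.IsHermitian) (h2 : P * P = P) :
    P.PosSemidef := by
  have h : P = Pᴴ * P := by rw [h1, h2]
  rw [h]
  exact Matrix.posSemidef_conjTranspose_mul_self P

lemma herm_smul {M : Matrix n n ℂ} (hM : M.IsHermitian) (c : ℝ) :
    (((c : ℝ) : ℂ) • M).IsHermitian := by
  show _ = _
  rw [Matrix.conjTranspose_smul, hM.eq, Complex.star_def, Complex.conj_ofReal]

omit [Fintype n] [DecidableEq n] in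
lemma herm_smul' {M : Matrix n n ℂ} (hM : M.IsHermitian) (c : ℝ) :
    (((c : ℝ) : ℂ) • M).IsHermitian := by
  show _ = _
  rw [Matrix.conjTranspose_smul, hM.eq, Complex.star_def, Complex.conj_ofReal]

lemma psd_smul {M : Matrix n n ℂ} (hM : M.PosSemidef) {c : ℝ} (hc : 0 ≤ c) :
    ((c : ℂ) • M).PosSemidef := by
  refine Matrix.PosSemidef.of_dotProduct_mulVec_nonneg (herm_smul' hM.1 c) fun x => ?_
  rw [Matrix.smul_mulVec, dotProduct_smul, smul_eq_mul]
  exact mul_nonneg (Complex.zero_le_real.2 hc) (hM.dotProduct_mulVec_nonneg x)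

lemma cross_bound {G : Matrix n n ℂ} {α : ℝ}
    (h1 : (((α : ℝ) : ℂ) • 1 - G).PosSemidef) (h2 : (G + ((α : ℝ) : ℂ) • 1).PosSemidef)
    (p q : n) : (G p q + G q p).re ≤ 2 * α := by
  have hs : ∀ r : n, star (Pi.single r 1) = (Pi.single r 1 : n → ℂ) := by
    intro r; funext i; simp [Pi.star_apply, Pi.single_apply, apply_ite]
  by_cases hpq : p = q
  · subst hpq
    have h := h1.dotProduct_mulVec_nonneg (Pi.single p 1)
    rw [hs, Matrix.mulVec_single_one, single_dotProduct] at h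
    simp only [Matrix.col_apply, Matrix.sub_apply, Matrix.smul_apply, Matrix.one_apply_eq, smul_eq_mul, mul_one,
      one_mul] at h
    have h' := (Complex.nonneg_iff.mp h).1
    simp only [Complex.sub_re, Complex.ofReal_re, Complex.add_re] at h' ⊢
    linarith
  · have hu := h1.dotProduct_mulVec_nonneg (Pi.single p 1 + Pi.single q 1)
    have hw := h2.dotProduct_mulVec_nonneg (Pi.single p 1 - Pi.single q 1)
    rw [star_add, hs, hs] at hu
    rw [star_sub, hs, hs] at hw
    simp only [Matrix.mulVec_add, Matrix.mulVec_sub, Matrix.mulVec_single_one, Matrix.col_apply,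
      dotProduct_add, dotProduct_sub, add_dotProduct, sub_dotProduct, single_dotProduct,
      mul_one, one_mul] at hu hw
    simp only [Matrix.sub_apply, Matrix.add_apply, Matrix.smul_apply, Matrix.one_apply,
      if_pos rfl, if_neg hpq, if_neg (Ne.symm hpq), smul_eq_mul, mul_one, mul_zero,
      if_true] at hu hw
    have hu' := (Complex.nonneg_iff.mp hu).1
    have hw' := (Complex.nonneg_iff.mp hw).1
    simp only [Complex.add_re, Complex.sub_re, Complex.ofReal_re, Complex.zero_re] at hu' hw' ⊢
    linarith

/-- If `S` is a Hermitian involution and `-α ≤ β ≤ α`, then `α•1 + β•S` is p.s.d. -/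
lemma psd_comb {S : Matrix n n ℂ} (hH : S.IsHermitian) (hS : S * S = 1)
    {α β : ℝ} (h1 : β ≤ α) (h2 : -α ≤ β) :
    (((α : ℝ) : ℂ) • 1 + ((β : ℝ) : ℂ) • S).PosSemidef := by
  have hplusH : ((1 : Matrix n n ℂ) + S).IsHermitian := Matrix.isHermitian_one.add hH
  have hminusH : ((1 : Matrix n n ℂ) - S).IsHermitian := Matrix.isHermitian_one.sub hH
  have hplus : ((1 : Matrix n n ℂ) + S).PosSemidef := by
    have hAA : ((1 : Matrix n n ℂ) + S) * (1 + S) = (2 : ℂ) • (1 + S) := by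
      rw [add_mul, mul_add, mul_add, hS]
      simp only [one_mul, mul_one]
      rw [two_smul]
      abel
    have hQ : (((1/2 : ℝ) : ℂ) • (1 + S)) * (((1/2 : ℝ) : ℂ) • (1 + S))
        = ((1/2 : ℝ) : ℂ) • (1 + S) := by
      rw [Matrix.smul_mul, Matrix.mul_smul, hAA, smul_smul, smul_smul]
      norm_num
    have h := psd_smul (psd_of_idem (herm_smul hplusH (1/2)) hQ) (by norm_num : (0:ℝ) ≤ 2)
    have he : ((2 : ℝ) : ℂ) • (((1/2 : ℝ) : ℂ) • ((1 : Matrix n n ℂ) + S)) = 1 + S := by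
      rw [smul_smul]; push_cast; module
    rwa [he] at h
  have hminus : ((1 : Matrix n n ℂ) - S).PosSemidef := by
    have hAA : ((1 : Matrix n n ℂ) - S) * (1 - S) = (2 : ℂ) • (1 - S) := by
      rw [sub_mul, mul_sub, mul_sub, hS]
      simp only [one_mul, mul_one]
      rw [two_smul]
      abel
    have hQ : (((1/2 : ℝ) : ℂ) • (1 - S)) * (((1/2 : ℝ) : ℂ) • (1 - S))
        = ((1/2 : ℝ) : ℂ) • (1 - S) := by
      rw [Matrix.smul_mul, Matrix.mul_smul, hAA, smul_smul, smul_smul]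
      norm_num
    have h := psd_smul (psd_of_idem (herm_smul hminusH (1/2)) hQ) (by norm_num : (0:ℝ) ≤ 2)
    have he : ((2 : ℝ) : ℂ) • (((1/2 : ℝ) : ℂ) • ((1 : Matrix n n ℂ) - S)) = 1 - S := by
      rw [smul_smul]; push_cast; module
    rwa [he] at h
  have key : ((α : ℝ) : ℂ) • (1 : Matrix n n ℂ) + ((β : ℝ) : ℂ) • S
      = ((((α - β)/2 : ℝ)) : ℂ) • (1 - S) + ((((α + β)/2 : ℝ)) : ℂ) • (1 + S) := by
    push_cast
    module
  rw [key]
  exact (psd_smul hminus (by linarith)).add (psd_smul hplus (by linarith))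

end general

section ent

variable {d : ℕ}

def swapMat (d : ℕ) : Matrix (Fin d × Fin d) (Fin d × Fin d) ℂ :=
  fun x y => if x.1 = y.2 ∧ y.1 = x.2 then 1 else 0

lemma maxEnt_herm : (maxEnt d).IsHermitian := by
  apply Matrix.IsHermitian.ext
  intro i j
  by_cases h1 : i.1 = i.2 <;> by_cases h2 : j.1 = j.2 <;>
    simp [maxEnt, h1, h2]

lemma maxEnt_idem (hd : 0 < d) : maxEnt d * maxEnt d = maxEnt d := by
  ext x y
  simp only [Matrix.mul_apply, maxEnt, Fintype.sum_prod_type, ite_and]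
  rcases x with ⟨a, b⟩
  rcases y with ⟨c, e⟩
  simp only []
  by_cases hab : a = b <;> by_cases hce : c = e <;>
    simp [hab, hce, Finset.sum_ite_eq, mul_comm, Finset.mul_sum]
  · have : (d : ℂ) ≠ 0 := Nat.cast_ne_zero.mpr hd.ne'
    rw [mul_comm]
    field_simp

lemma swap_herm : (swapMat d).IsHermitian := by
  apply Matrix.IsHermitian.ext
  intro i j
  by_cases h1 : i.1 = j.2 <;> by_cases h2 : j.1 = i.2 <;>
    simp [swapMat, h1, h2]

lemma swap_mul_swap : swapMat d * swapMat d = 1 := by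
  ext ⟨a, b⟩ ⟨c, e⟩
  simp only [Matrix.mul_apply, swapMat, Fintype.sum_prod_type, ite_and, Matrix.one_apply,
    Prod.mk.injEq]
  simp [Finset.sum_ite_eq, Finset.sum_ite_eq', and_comm, eq_comm]

lemma ptrans_maxEnt : ptrans (maxEnt d) = (1 / (d : ℂ)) • swapMat d := by
  ext x y
  by_cases h1 : x.1 = y.2 <;> by_cases h2 : y.1 = x.2 <;>
    simp [ptrans, maxEnt, swapMat, Matrix.smul_apply, h1, h2]

lemma ptrans_smul (c : ℂ) (M : Matrix ((Fin d) × (Fin d)) ((Fin d) × (Fin d)) ℂ) :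
    ptrans (c • M) = c • ptrans M := rfl

def dvec (d : ℕ) : Fin d × Fin d → ℂ := fun p => if p.1 = p.2 then 1 else 0

lemma star_dvec : star (dvec d) = dvec d := by
  funext p; simp [dvec, Pi.star_apply, apply_ite]

lemma dvec_dot : dvec d ⬝ᵥ dvec d = (d : ℂ) := by
  simp [dotProduct, dvec, Fintype.sum_prod_type, ite_and, Finset.sum_ite_eq, mul_ite, ite_mul]

lemma dvec_F (F : Matrix (Fin d × Fin d) (Fin d × Fin d) ℂ) :
    dvec d ⬝ᵥ (F *ᵥ dvec d) = ∑ i, ∑ j, F (i, i) (j, j) := by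
  simp only [dotProduct, Matrix.mulVec, dotProduct, dvec, Fintype.sum_prod_type,
    ite_mul, mul_ite, one_mul, mul_one, zero_mul, mul_zero]
  simp [Finset.sum_ite_eq, Finset.sum_ite_eq']

lemma trace_F_maxEnt (F : Matrix (Fin d × Fin d) (Fin d × Fin d) ℂ) :
    (F * maxEnt d).trace = (1 / (d : ℂ)) * ∑ i, ∑ j, F (i, i) (j, j) := by
  simp only [Matrix.trace, Matrix.diag, Matrix.mul_apply, maxEnt, mul_ite, mul_zero,
    Fintype.sum_prod_type, ite_and]
  simp [Finset.sum_ite_eq, Finset.sum_ite_eq', Finset.mul_sum, mul_comm]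

lemma trace_maxEnt (hd : 0 < d) : (maxEnt d).trace = 1 := by
  have h := trace_F_maxEnt (d := d) 1
  rw [one_mul] at h
  rw [h]
  have : (d : ℂ) ≠ 0 := Nat.cast_ne_zero.mpr hd.ne'
  simp [Matrix.one_apply, Prod.ext_iff, Finset.sum_ite_eq]
  field_simp

end ent

end FGammaAux

open FGammaAux

/-- `F_Γ(Φ(d); K) = min(1, d/K)`. -/
theorem FGamma_maxEnt (d : ℕ) (hd : 1 ≤ d) (K : ℝ) (hK : 0 < K) :
    FGamma (maxEnt d) K = min 1 ((d : ℝ) / K) := by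
  have hd0 : 0 < d := hd
  have hdR : (0 : ℝ) < d := by exact_mod_cast hd0
  have hdc : (d : ℂ) ≠ 0 := Nat.cast_ne_zero.mpr hd0.ne'
  set c : ℝ := min 1 ((d : ℝ) / K) with hc
  have hc0 : 0 ≤ c := le_min zero_le_one (by positivity)
  have hc1 : c ≤ 1 := min_le_left _ _
  have hcd : c ≤ (d : ℝ) / K := min_le_right _ _
  set Sset : Set ℝ := {x : ℝ | ∃ F : Matrix (Fin d × Fin d) (Fin d × Fin d) ℂ,
    F.PosSemidef ∧ (1 - F).PosSemidef ∧
    (((1 / K : ℝ) : ℂ) • 1 - ptrans F).PosSemidef ∧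
    (ptrans F + ((1 / K : ℝ) : ℂ) • 1).PosSemidef ∧
    x = (((F * maxEnt d).trace)).re} with hSset
  have hFG : FGamma (maxEnt d) K = sSup Sset := rfl
  -- membership of c
  have hmem : c ∈ Sset := by
    refine ⟨((c : ℝ) : ℂ) • maxEnt d, ?_, ?_, ?_, ?_, ?_⟩
    · exact psd_smul (psd_of_idem maxEnt_herm (maxEnt_idem hd0)) hc0
    · have hid : (1 : Matrix (Fin d × Fin d) (Fin d × Fin d) ℂ) - ((c : ℝ) : ℂ) • maxEnt d
          = (((1 - c : ℝ)) : ℂ) • maxEnt d + (1 - maxEnt d) := by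
        push_cast
        module
      rw [hid]
      have h1 : ((1 : Matrix (Fin d × Fin d) (Fin d × Fin d) ℂ) - maxEnt d).PosSemidef := by
        refine psd_of_idem (Matrix.isHermitian_one.sub maxEnt_herm) ?_
        rw [mul_sub, sub_mul, sub_mul, maxEnt_idem hd0]
        simp only [one_mul, mul_one]
        abel
      exact (psd_smul (psd_of_idem maxEnt_herm (maxEnt_idem hd0)) (by linarith)).add h1
    · have hpt : ptrans (((c : ℝ) : ℂ) • maxEnt d) = (((c / d : ℝ)) : ℂ) • swapMat d := by
        rw [ptrans_smul, ptrans_maxEnt, smul_smul]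
        push_cast
        congr 1
        field_simp
      have hcd' : c / (d : ℝ) ≤ 1 / K := by
        rw [le_div_iff₀ hK] at hcd
        rw [div_le_div_iff₀ hdR hK]
        linarith
      have hcd0 : 0 ≤ c / (d : ℝ) := by positivity
      have h1K : 0 ≤ 1 / K := by positivity
      have heq : ((1 / K : ℝ) : ℂ) • (1 : Matrix (Fin d × Fin d) (Fin d × Fin d) ℂ)
          - (((c / d : ℝ)) : ℂ) • swapMat d
          = ((1 / K : ℝ) : ℂ) • 1 + (((-(c / d) : ℝ)) : ℂ) • swapMat d := by
        push_cast
        module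
      rw [hpt, heq]
      exact psd_comb swap_herm swap_mul_swap (by linarith) (by linarith)
    · have hpt : ptrans (((c : ℝ) : ℂ) • maxEnt d) = (((c / d : ℝ)) : ℂ) • swapMat d := by
        rw [ptrans_smul, ptrans_maxEnt, smul_smul]
        push_cast
        congr 1
        field_simp
      have hcd' : c / (d : ℝ) ≤ 1 / K := by
        rw [le_div_iff₀ hK] at hcd
        rw [div_le_div_iff₀ hdR hK]
        linarith
      have hcd0 : 0 ≤ c / (d : ℝ) := by positivity
      have h1K : 0 ≤ 1 / K := by positivity
      rw [hpt, add_comm]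
      exact psd_comb swap_herm swap_mul_swap (by linarith) (by linarith)
    · rw [Matrix.smul_mul, maxEnt_idem hd0, Matrix.trace_smul, trace_maxEnt hd0]
      simp
  -- upper bounds
  have hub : ∀ x ∈ Sset, x ≤ c := by
    rintro x ⟨F, hF0, hF1, hPT1, hPT2, rfl⟩
    set T : ℂ := ∑ i, ∑ j, F (i, i) (j, j) with hT
    have htr : ((F * maxEnt d).trace).re = (1 / (d : ℝ)) * T.re := by
      rw [trace_F_maxEnt]
      have : (1 / (d : ℂ)) = (((1 / d : ℝ)) : ℂ) := by push_cast; ring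
      rw [this, ← hT, Complex.re_ofReal_mul]
    rw [htr]
    refine le_min ?_ ?_
    · -- ≤ 1
      have h := hF1.dotProduct_mulVec_nonneg (dvec d)
      rw [star_dvec, Matrix.sub_mulVec, Matrix.one_mulVec, dotProduct_sub, dvec_dot,
        dvec_F] at h
      have h' := (Complex.nonneg_iff.mp h).1
      rw [Complex.sub_re, Complex.natCast_re] at h'
      have hTre : T.re ≤ d := by rw [hT]; linarith
      rw [div_mul_eq_mul_div, one_mul, div_le_one hdR]
      linarith
    · -- ≤ d / K
      have hterm : ∀ i j : Fin d, (F (i, i) (j, j)).re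
          = ((ptrans F) (i, j) (j, i)).re := fun i j => rfl
      have h1 : T.re = ∑ i : Fin d, ∑ j : Fin d, ((ptrans F) (i, j) (j, i)).re := by
        rw [hT, Complex.re_sum]
        refine Finset.sum_congr rfl fun i _ => ?_
        rw [Complex.re_sum]
        rfl
      have h2 : T.re = ∑ i : Fin d, ∑ j : Fin d, ((ptrans F) (j, i) (i, j)).re := by
        rw [h1, Finset.sum_comm]
      have hsum : 2 * T.re = ∑ i : Fin d, ∑ j : Fin d,
          ((ptrans F) (i, j) (j, i) + (ptrans F) (j, i) (i, j)).re := by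
        calc 2 * T.re
            = (∑ i : Fin d, ∑ j : Fin d, ((ptrans F) (i, j) (j, i)).re)
              + (∑ i : Fin d, ∑ j : Fin d, ((ptrans F) (j, i) (i, j)).re) := by
              rw [← h1, ← h2]; ring
          _ = ∑ i : Fin d, ∑ j : Fin d,
              (((ptrans F) (i, j) (j, i)).re + ((ptrans F) (j, i) (i, j)).re) := by
              rw [← Finset.sum_add_distrib]
              exact Finset.sum_congr rfl fun i _ => by rw [← Finset.sum_add_distrib]
          _ = ∑ i : Fin d, ∑ j : Fin d,
              ((ptrans F) (i, j) (j, i) + (ptrans F) (j, i) (i, j)).re :=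
              Finset.sum_congr rfl fun i _ => Finset.sum_congr rfl fun j _ =>
                (Complex.add_re _ _).symm
      have hbd : ∀ i j : Fin d, ((ptrans F) (i, j) (j, i) + (ptrans F) (j, i) (i, j)).re
          ≤ 2 * (1 / K) := fun i j => cross_bound hPT1 hPT2 (i, j) (j, i)
      have hsum2 : 2 * T.re ≤ (d : ℝ) ^ 2 * (2 * (1 / K)) := by
        rw [hsum]
        calc ∑ i : Fin d, ∑ j : Fin d, ((ptrans F) (i, j) (j, i) + (ptrans F) (j, i) (i, j)).re
            ≤ ∑ _i : Fin d, ∑ _j : Fin d, 2 * (1 / K) := by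
              exact Finset.sum_le_sum fun i _ => Finset.sum_le_sum fun j _ => hbd i j
          _ = (d : ℝ) ^ 2 * (2 * (1 / K)) := by
              simp only [Finset.sum_const, Finset.card_univ, Fintype.card_fin, nsmul_eq_mul]
              ring
      rw [div_mul_eq_mul_div, one_mul, div_le_div_iff₀ hdR hK]
      have hcK : (d : ℝ) ^ 2 * (2 * (1 / K)) * K = 2 * (d : ℝ) ^ 2 := by
        field_simp
      have h3 : 2 * T.re * K ≤ 2 * (d : ℝ) ^ 2 := by
        have h4 := mul_le_mul_of_nonneg_right hsum2 hK.le
        linarith [h4, hcK.le]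
      nlinarith [h3]
  rw [hFG]
  exact le_antisymm (csSup_le ⟨c, hmem⟩ hub) (le_csSup ⟨c, hub⟩ hmem)
end
end

section
/- Tensoring with a p.p.t. state does not change fidelity of p.p.t. distillation: for any real K > 0, any state ρ and any state ρ' whose partial transpose ρ'^Γ is positive semidefinite, F_Γ(ρ ⊗ ρ'; K) = F_Γ(ρ; K), where ρ ⊗ ρ' is regarded as a state on the bipartite system grouping the two first factors against the two second factors. -/
open Matrix Filter
open scoped ComplexOrder

noncomputable section

/-- Tensor product of two bipartite matrices, regrouped as a bipartite matrix
(first factors against second factors). -/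
def tensorBip {ι₁ κ₁ ι₂ κ₂ : Type*}
    (ρ₁ : Matrix (ι₁ × κ₁) (ι₁ × κ₁) ℂ) (ρ₂ : Matrix (ι₂ × κ₂) (ι₂ × κ₂) ℂ) :
    Matrix ((ι₁ × ι₂) × (κ₁ × κ₂)) ((ι₁ × ι₂) × (κ₁ × κ₂)) ℂ :=
  fun x y => ρ₁ (x.1.1, x.2.1) (y.1.1, y.2.1) * ρ₂ (x.1.2, x.2.2) (y.1.2, y.2.2)

lemma psd_eq_conjTranspose_mul_self {n : Type*} [Fintype n] [DecidableEq n]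
    {A : Matrix n n ℂ} (hA : A.PosSemidef) : ∃ B : Matrix n n ℂ, A = Bᴴ * B := by
  open scoped MatrixOrder in
  obtain ⟨B, rfl⟩ := CStarAlgebra.nonneg_iff_eq_star_mul_self.mp hA.nonneg
  exact ⟨B, rfl⟩

def regroup (α β γ δ : Type*) : (α × β) × (γ × δ) ≃ (α × γ) × (β × δ) :=
  ⟨fun w => ((w.1.1, w.2.1), (w.1.2, w.2.2)), fun z => ((z.1.1, z.2.1), (z.1.2, z.2.2)),
   fun ⟨⟨_,_⟩,⟨_,_⟩⟩ => rfl, fun ⟨⟨_,_⟩,⟨_,_⟩⟩ => rfl⟩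

set_option linter.unusedSectionVars false
variable {ι₁ κ₁ ι₂ κ₂ : Type*} [Fintype ι₁] [Fintype κ₁] [Fintype ι₂] [Fintype κ₂]
  [DecidableEq ι₁] [DecidableEq κ₁] [DecidableEq ι₂] [DecidableEq κ₂]

lemma tensorBip_mul (A C : Matrix (ι₁ × κ₁) (ι₁ × κ₁) ℂ) (B D : Matrix (ι₂ × κ₂) (ι₂ × κ₂) ℂ) :
    tensorBip A B * tensorBip C D = tensorBip (A * C) (B * D) := by
  ext x y
  rw [Matrix.mul_apply, ← Equiv.sum_comp (regroup ι₁ κ₁ ι₂ κ₂), Fintype.sum_prod_type]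
  show _ = (A * C) _ _ * ((B * D) _ _)
  rw [Matrix.mul_apply, Matrix.mul_apply, Finset.sum_mul_sum]
  apply Finset.sum_congr rfl; intro u _
  apply Finset.sum_congr rfl; intro v _
  simp only [tensorBip, regroup, Equiv.coe_fn_mk]
  exact mul_mul_mul_comm _ _ _ _

lemma trace_tensorBip (A : Matrix (ι₁ × κ₁) (ι₁ × κ₁) ℂ) (B : Matrix (ι₂ × κ₂) (ι₂ × κ₂) ℂ) :
    (tensorBip A B).trace = A.trace * B.trace := by
  rw [Matrix.trace, ← Equiv.sum_comp (regroup ι₁ κ₁ ι₂ κ₂), Fintype.sum_prod_type,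
    Matrix.trace, Matrix.trace, Finset.sum_mul_sum]
  rfl


lemma conjTranspose_tensorBip (A : Matrix (ι₁ × κ₁) (ι₁ × κ₁) ℂ)
    (B : Matrix (ι₂ × κ₂) (ι₂ × κ₂) ℂ) :
    (tensorBip A B)ᴴ = tensorBip Aᴴ Bᴴ := by
  ext x y
  simp [tensorBip, Matrix.conjTranspose_apply]

lemma tensorBip_posSemidef {A : Matrix (ι₁ × κ₁) (ι₁ × κ₁) ℂ}
    {B : Matrix (ι₂ × κ₂) (ι₂ × κ₂) ℂ} (hA : A.PosSemidef) (hB : B.PosSemidef) :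
    (tensorBip A B).PosSemidef := by
  obtain ⟨X, rfl⟩ := psd_eq_conjTranspose_mul_self hA
  obtain ⟨Y, rfl⟩ := psd_eq_conjTranspose_mul_self hB
  have : tensorBip (Xᴴ * X) (Yᴴ * Y) = (tensorBip X Y)ᴴ * tensorBip X Y := by
    rw [conjTranspose_tensorBip, tensorBip_mul]
  rw [this]
  exact Matrix.posSemidef_conjTranspose_mul_self _

lemma ptrans_tensorBip (A : Matrix (ι₁ × κ₁) (ι₁ × κ₁) ℂ) (B : Matrix (ι₂ × κ₂) (ι₂ × κ₂) ℂ) :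
    ptrans (tensorBip A B) = tensorBip (ptrans A) (ptrans B) := rfl

lemma ptrans_one : ptrans (1 : Matrix (ι₁ × κ₁) (ι₁ × κ₁) ℂ) = 1 := by
  ext x y
  simp only [ptrans, Matrix.one_apply, Prod.ext_iff, Prod.mk.injEq]
  by_cases h1 : x.1 = y.1 <;> by_cases h2 : x.2 = y.2 <;> simp [h1, h2, eq_comm]

lemma tensorBip_one : tensorBip (1 : Matrix (ι₁ × κ₁) (ι₁ × κ₁) ℂ)
    (1 : Matrix (ι₂ × κ₂) (ι₂ × κ₂) ℂ) = 1 := by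
  ext x y
  simp only [tensorBip, Matrix.one_apply, Prod.ext_iff, Prod.mk.injEq]
  by_cases h1 : x.1.1 = y.1.1 <;> by_cases h2 : x.1.2 = y.1.2 <;>
    by_cases h3 : x.2.1 = y.2.1 <;> by_cases h4 : x.2.2 = y.2.2 <;>
    simp [h1, h2, h3, h4]

lemma tensorBip_sub_left (A B : Matrix (ι₁ × κ₁) (ι₁ × κ₁) ℂ)
    (C : Matrix (ι₂ × κ₂) (ι₂ × κ₂) ℂ) :
    tensorBip (A - B) C = tensorBip A C - tensorBip B C := by
  ext x y; simp [tensorBip, sub_mul]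

lemma tensorBip_add_left (A B : Matrix (ι₁ × κ₁) (ι₁ × κ₁) ℂ)
    (C : Matrix (ι₂ × κ₂) (ι₂ × κ₂) ℂ) :
    tensorBip (A + B) C = tensorBip A C + tensorBip B C := by
  ext x y; simp [tensorBip, add_mul]

lemma tensorBip_smul_left (c : ℂ) (A : Matrix (ι₁ × κ₁) (ι₁ × κ₁) ℂ)
    (C : Matrix (ι₂ × κ₂) (ι₂ × κ₂) ℂ) :
    tensorBip (c • A) C = c • tensorBip A C := by
  ext x y; simp [tensorBip, mul_assoc]

/-- Trace of a PSD matrix (complex) is nonneg. -/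
lemma psd_trace_nonneg {n : Type*} [Fintype n] [DecidableEq n] {M : Matrix n n ℂ}
    (hM : M.PosSemidef) : 0 ≤ M.trace := by
  have h : ∀ i, 0 ≤ M i i := fun i => by
    simpa [dotProduct, Pi.single_apply] using hM.dotProduct_mulVec_nonneg (Pi.single i 1)
  exact Finset.sum_nonneg fun i _ => h i

lemma trace_mul_psd_nonneg {n : Type*} [Fintype n] [DecidableEq n]
    {G W : Matrix n n ℂ} (hG : G.PosSemidef) (hW : W.PosSemidef) :
    0 ≤ (G * W).trace := by
  obtain ⟨B, rfl⟩ := psd_eq_conjTranspose_mul_self hW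
  rw [← Matrix.mul_assoc, Matrix.trace_mul_cycle]
  exact psd_trace_nonneg (hG.mul_mul_conjTranspose_same B)

lemma posSemidef_vecMulVec_star {n : Type*} [Fintype n] [DecidableEq n] (v : n → ℂ) :
    (Matrix.vecMulVec v (star v)).PosSemidef := by
  refine Matrix.PosSemidef.of_dotProduct_mulVec_nonneg ?_ ?_
  · ext i j
    simp [Matrix.vecMulVec_apply, Matrix.conjTranspose_apply, mul_comm]
  · intro x
    have : (Matrix.vecMulVec v (star v)) *ᵥ x = (star v ⬝ᵥ x) • v := by
      ext i
      simp [Matrix.mulVec, Matrix.vecMulVec_apply, dotProduct, Finset.mul_sum, mul_comm,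
        mul_left_comm, smul_eq_mul]
    rw [this]
    have h2 : star x ⬝ᵥ ((star v ⬝ᵥ x) • v) = (star v ⬝ᵥ x) * (star x ⬝ᵥ v) := by
      simp [dotProduct_smul, smul_eq_mul, mul_comm]
    rw [h2]
    have h3 : star x ⬝ᵥ v = star (star v ⬝ᵥ x) := by
      simp [dotProduct, mul_comm]
    rw [h3]
    exact mul_star_self_nonneg _

/-- The map `G ↦ Tr₂[(1⊗σ^{1/2}) G (1⊗σ^{1/2})]`-style contraction. -/
def phiMap (σ : Matrix (ι₂ × κ₂) (ι₂ × κ₂) ℂ)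
    (G : Matrix ((ι₁ × ι₂) × (κ₁ × κ₂)) ((ι₁ × ι₂) × (κ₁ × κ₂)) ℂ) :
    Matrix (ι₁ × κ₁) (ι₁ × κ₁) ℂ :=
  fun x y => ∑ p : (ι₂ × κ₂) × (ι₂ × κ₂),
    G ((x.1, p.1.1), (x.2, p.1.2)) ((y.1, p.2.1), (y.2, p.2.2)) * σ p.2 p.1

lemma phiMap_sub (σ : Matrix (ι₂ × κ₂) (ι₂ × κ₂) ℂ)
    (G H : Matrix ((ι₁ × ι₂) × (κ₁ × κ₂)) ((ι₁ × ι₂) × (κ₁ × κ₂)) ℂ) :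
    phiMap σ (G - H) = phiMap σ G - phiMap σ H := by
  ext x y
  simp [phiMap, sub_mul, Finset.sum_sub_distrib]

lemma phiMap_add (σ : Matrix (ι₂ × κ₂) (ι₂ × κ₂) ℂ)
    (G H : Matrix ((ι₁ × ι₂) × (κ₁ × κ₂)) ((ι₁ × ι₂) × (κ₁ × κ₂)) ℂ) :
    phiMap σ (G + H) = phiMap σ G + phiMap σ H := by
  ext x y
  simp [phiMap, add_mul, Finset.sum_add_distrib]

lemma phiMap_smul (σ : Matrix (ι₂ × κ₂) (ι₂ × κ₂) ℂ) (c : ℂ)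
    (G : Matrix ((ι₁ × ι₂) × (κ₁ × κ₂)) ((ι₁ × ι₂) × (κ₁ × κ₂)) ℂ) :
    phiMap σ (c • G) = c • phiMap σ G := by
  ext x y
  simp [phiMap, Finset.mul_sum, mul_assoc]

lemma phiMap_one (σ : Matrix (ι₂ × κ₂) (ι₂ × κ₂) ℂ) :
    phiMap (ι₁ := ι₁) (κ₁ := κ₁) σ 1 = σ.trace • 1 := by
  ext x y
  simp only [phiMap, Matrix.one_apply, Prod.mk.injEq, Prod.ext_iff]
  by_cases h1 : x.1 = y.1 <;> by_cases h2 : x.2 = y.2 <;>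
    simp [h1, h2, Fintype.sum_prod_type, ite_and, Matrix.trace, Matrix.diag,
      Finset.sum_ite_eq, Matrix.smul_apply, Matrix.one_apply, Prod.ext_iff, smul_eq_mul]

def bigEquiv (ι₁ κ₁ ι₂ κ₂ : Type*) :
    ((ι₁ × κ₁) × ((ι₁ × κ₁) × ((ι₂ × κ₂) × (ι₂ × κ₂)))) ≃
      (((ι₁ × ι₂) × (κ₁ × κ₂)) × ((ι₁ × ι₂) × (κ₁ × κ₂))) where
  toFun t := (((t.1.1, t.2.2.1.1), (t.1.2, t.2.2.1.2)),
              ((t.2.1.1, t.2.2.2.1), (t.2.1.2, t.2.2.2.2)))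
  invFun s := ((s.1.1.1, s.1.2.1),
               ((s.2.1.1, s.2.2.1), ((s.1.1.2, s.1.2.2), (s.2.1.2, s.2.2.2))))
  left_inv := by rintro ⟨⟨_,_⟩,⟨⟨_,_⟩,⟨⟨_,_⟩,⟨_,_⟩⟩⟩⟩; rfl
  right_inv := by rintro ⟨⟨⟨_,_⟩,⟨_,_⟩⟩,⟨⟨_,_⟩,⟨_,_⟩⟩⟩; rfl

lemma trace_phiMap_mul (σ : Matrix (ι₂ × κ₂) (ι₂ × κ₂) ℂ)
    (G : Matrix ((ι₁ × ι₂) × (κ₁ × κ₂)) ((ι₁ × ι₂) × (κ₁ × κ₂)) ℂ)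
    (ρ : Matrix (ι₁ × κ₁) (ι₁ × κ₁) ℂ) :
    (phiMap σ G * ρ).trace = (G * tensorBip ρ σ).trace := by
  rw [Matrix.trace, Matrix.trace]
  simp only [Matrix.diag, Matrix.mul_apply, phiMap, Finset.sum_mul]
  simp only [← Finset.sum_product', Finset.univ_product_univ]
  apply Fintype.sum_equiv (bigEquiv ι₁ κ₁ ι₂ κ₂)
  rintro ⟨⟨i,j⟩,⟨⟨k,l⟩,⟨⟨m,n⟩,⟨m',n'⟩⟩⟩⟩
  simp only [bigEquiv, tensorBip, Equiv.coe_fn_mk]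
  ring

lemma dot_phiMap (σ : Matrix (ι₂ × κ₂) (ι₂ × κ₂) ℂ)
    (G : Matrix ((ι₁ × ι₂) × (κ₁ × κ₂)) ((ι₁ × ι₂) × (κ₁ × κ₂)) ℂ)
    (v : (ι₁ × κ₁) → ℂ) :
    star v ⬝ᵥ (phiMap σ G *ᵥ v) =
      (G * tensorBip (Matrix.vecMulVec v (star v)) σ).trace := by
  rw [Matrix.trace]
  simp only [dotProduct, Matrix.mulVec, Matrix.diag, Matrix.mul_apply, phiMap, dotProduct,
    Finset.sum_mul, Finset.mul_sum]
  simp only [← Finset.sum_product', Finset.univ_product_univ]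
  apply Fintype.sum_equiv (bigEquiv ι₁ κ₁ ι₂ κ₂)
  rintro ⟨⟨i,j⟩,⟨⟨k,l⟩,⟨⟨m,n⟩,⟨m',n'⟩⟩⟩⟩
  simp only [bigEquiv, tensorBip, Equiv.coe_fn_mk, Matrix.vecMulVec_apply, Pi.star_apply]
  ring

lemma phiMap_isHermitian {σ : Matrix (ι₂ × κ₂) (ι₂ × κ₂) ℂ}
    {G : Matrix ((ι₁ × ι₂) × (κ₁ × κ₂)) ((ι₁ × ι₂) × (κ₁ × κ₂)) ℂ}
    (hσ : σ.IsHermitian) (hG : G.IsHermitian) : (phiMap σ G).IsHermitian := by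
  ext x y
  rw [Matrix.conjTranspose_apply, phiMap, phiMap, star_sum]
  apply Fintype.sum_equiv (Equiv.prodComm _ _)
  rintro ⟨⟨m,n⟩,⟨m',n'⟩⟩
  simp only [Equiv.prodComm_apply, Prod.swap_prod_mk, star_mul']
  rw [← hG.apply, ← hσ.apply]
  simp [star_star, mul_comm]

lemma phiMap_posSemidef {σ : Matrix (ι₂ × κ₂) (ι₂ × κ₂) ℂ}
    {G : Matrix ((ι₁ × ι₂) × (κ₁ × κ₂)) ((ι₁ × ι₂) × (κ₁ × κ₂)) ℂ}
    (hσ : σ.PosSemidef) (hG : G.PosSemidef) : (phiMap σ G).PosSemidef := by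
  refine Matrix.PosSemidef.of_dotProduct_mulVec_nonneg (phiMap_isHermitian hσ.1 hG.1) fun v => ?_
  rw [dot_phiMap]
  exact trace_mul_psd_nonneg hG (tensorBip_posSemidef (posSemidef_vecMulVec_star v) hσ)

lemma ptrans_phiMap (σ : Matrix (ι₂ × κ₂) (ι₂ × κ₂) ℂ)
    (G : Matrix ((ι₁ × ι₂) × (κ₁ × κ₂)) ((ι₁ × ι₂) × (κ₁ × κ₂)) ℂ) :
    ptrans (phiMap σ G) = phiMap (ptrans σ) (ptrans G) := by
  ext x y
  show (phiMap σ G) (x.1, y.2) (y.1, x.2) = _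
  rw [phiMap, phiMap]
  apply Fintype.sum_equiv
    (⟨fun p => ((p.1.1, p.2.2), (p.2.1, p.1.2)), fun p => ((p.1.1, p.2.2), (p.2.1, p.1.2)),
      fun ⟨⟨_,_⟩,⟨_,_⟩⟩ => rfl, fun ⟨⟨_,_⟩,⟨_,_⟩⟩ => rfl⟩ :
      ((ι₂ × κ₂) × (ι₂ × κ₂)) ≃ ((ι₂ × κ₂) × (ι₂ × κ₂)))
  rintro ⟨⟨m,n⟩,⟨m',n'⟩⟩
  rfl

lemma trace_ptrans (σ : Matrix (ι₂ × κ₂) (ι₂ × κ₂) ℂ) : (ptrans σ).trace = σ.trace := rfl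

/-- Tensoring with a p.p.t. state does not change the fidelity of p.p.t. distillation. -/
theorem FGamma_tensor_ppt {a b c e : ℕ}
    (ρ : Matrix (Fin a × Fin b) (Fin a × Fin b) ℂ)
    (ρ' : Matrix (Fin c × Fin e) (Fin c × Fin e) ℂ)
    (hρ : ρ.PosSemidef) (hρtr : ρ.trace = 1)
    (hρ' : ρ'.PosSemidef) (hρ'tr : ρ'.trace = 1)
    (hρ'ppt : (ptrans ρ').PosSemidef)
    (K : ℝ) (hK : 0 < K) :
    FGamma (tensorBip ρ ρ') K = FGamma ρ K := by
  unfold FGamma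
  congr 1
  ext x
  simp only [Set.mem_setOf_eq]
  constructor
  · rintro ⟨F, h1, h2, h3, h4, rfl⟩
    refine ⟨phiMap ρ' F, phiMap_posSemidef hρ' h1, ?_, ?_, ?_, ?_⟩
    · have h : (1 : Matrix (Fin a × Fin b) (Fin a × Fin b) ℂ) - phiMap ρ' F
          = phiMap ρ' (1 - F) := by
        rw [phiMap_sub, phiMap_one, hρ'tr, one_smul]
      rw [h]; exact phiMap_posSemidef hρ' h2
    · have h : ((1 / K : ℝ) : ℂ) • (1 : Matrix (Fin a × Fin b) (Fin a × Fin b) ℂ)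
          - ptrans (phiMap ρ' F)
          = phiMap (ptrans ρ') (((1 / K : ℝ) : ℂ) • 1 - ptrans F) := by
        rw [phiMap_sub, phiMap_smul, phiMap_one, trace_ptrans, hρ'tr, one_smul,
          ptrans_phiMap]
      rw [h]; exact phiMap_posSemidef hρ'ppt h3
    · have h : ptrans (phiMap ρ' F) + ((1 / K : ℝ) : ℂ) • (1 : Matrix (Fin a × Fin b) (Fin a × Fin b) ℂ)
          = phiMap (ptrans ρ') (ptrans F + ((1 / K : ℝ) : ℂ) • 1) := by
        rw [phiMap_add, phiMap_smul, phiMap_one, trace_ptrans, hρ'tr, one_smul,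
          ptrans_phiMap]
      rw [h]; exact phiMap_posSemidef hρ'ppt h4
    · rw [trace_phiMap_mul]
  · rintro ⟨F, h1, h2, h3, h4, rfl⟩
    refine ⟨tensorBip F 1, tensorBip_posSemidef h1 Matrix.PosSemidef.one, ?_, ?_, ?_, ?_⟩
    · have h : (1 : Matrix ((Fin a × Fin c) × (Fin b × Fin e)) _ ℂ) - tensorBip F 1
          = tensorBip (1 - F) 1 := by
        rw [tensorBip_sub_left, tensorBip_one]
      rw [h]; exact tensorBip_posSemidef h2 Matrix.PosSemidef.one
    · have h : ((1 / K : ℝ) : ℂ) • (1 : Matrix ((Fin a × Fin c) × (Fin b × Fin e)) _ ℂ)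
          - ptrans (tensorBip F 1)
          = tensorBip (((1 / K : ℝ) : ℂ) • 1 - ptrans F) 1 := by
        rw [ptrans_tensorBip, ptrans_one, tensorBip_sub_left, tensorBip_smul_left,
          tensorBip_one]
      rw [h]; exact tensorBip_posSemidef h3 Matrix.PosSemidef.one
    · have h : ptrans (tensorBip F 1)
          + ((1 / K : ℝ) : ℂ) • (1 : Matrix ((Fin a × Fin c) × (Fin b × Fin e)) _ ℂ)
          = tensorBip (ptrans F + ((1 / K : ℝ) : ℂ) • 1) 1 := by
        rw [ptrans_tensorBip, ptrans_one, tensorBip_add_left, tensorBip_smul_left,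
          tensorBip_one]
      rw [h]; exact tensorBip_posSemidef h4 Matrix.PosSemidef.one
    · rw [tensorBip_mul, one_mul, trace_tensorBip, hρ'tr, mul_one]
end
end
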